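/- The J-function J(σ) = 1 - E[log₂(1 + e^{-Λ})], where Λ ~ N(σ²/2, σ²), is strictly increasing in σ on (0, ∞), with limit 0 as σ → 0⁺ and limit 1 as σ → ∞. -/

import Mathlib

open MeasureTheory Real

/-- The J-function: `J(σ) = 1 - E[log₂(1 + e^{-Λ})]` where `Λ ~ N(σ²/2, σ²)`. -/
noncomputable def Jfun (σ : ℝ) : ℝ :=
  1 - ∫ x : ℝ, ProbabilityTheory.gaussianPDFReal (σ ^ 2 / 2) (Real.toNNReal (σ ^ 2)) x *
        Real.logb 2 (1 + Real.exp (-x))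

open Filter ProbabilityTheory Set

namespace JfunAux

noncomputable def phi (z : ℝ) : ℝ := (Real.sqrt (2*Real.pi))⁻¹ * Real.exp (-(z^2)/2)

lemma phi_pos (z : ℝ) : 0 < phi z := by
  unfold phi; positivity

lemma phi_nonneg (z : ℝ) : 0 ≤ phi z := (phi_pos z).le

lemma phi_cont : Continuous phi := by
  unfold phi; fun_prop

lemma phi_hasDeriv (z : ℝ) : HasDerivAt phi (-z * phi z) z := by
  have h1 : HasDerivAt (fun x : ℝ => -(x^2)/2) (-z) z := by
    have := ((hasDerivAt_pow 2 z).neg).div_const 2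
    simpa using this.congr_deriv (by ring)
  have h2 := (h1.exp).const_mul ((Real.sqrt (2*Real.pi))⁻¹)
  refine h2.congr_deriv ?_
  unfold phi; ring

lemma phi_tendsto_atTop : Tendsto phi atTop (nhds 0) := by
  have h1 : Tendsto (fun z : ℝ => -(z^2)/2) atTop atBot := by
    apply Filter.Tendsto.atBot_div_const (by norm_num)
    exact tendsto_neg_atBot_iff.mpr (tendsto_pow_atTop (by norm_num))
  have := (Real.tendsto_exp_atBot).comp h1
  have h2 := this.const_mul ((Real.sqrt (2*Real.pi))⁻¹)
  unfold phi
  simpa only [mul_zero, Function.comp_def] using h2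

lemma phi_tendsto_atBot : Tendsto phi atBot (nhds 0) := by
  have := phi_tendsto_atTop.comp tendsto_neg_atBot_atTop
  exact this.congr (fun z => by unfold phi; simp only [Function.comp_apply, neg_sq])


noncomputable def gg (x : ℝ) : ℝ := Real.logb 2 (1 + Real.exp (-x))

lemma log2_pos : 0 < Real.log 2 := Real.log_pos one_lt_two

lemma one_lt_base (x : ℝ) : 0 < 1 + Real.exp (-x) := by positivity

lemma gg_nonneg (x : ℝ) : 0 ≤ gg x := by
  apply Real.logb_nonneg one_lt_two
  have := Real.exp_pos (-x); linarith

lemma gg_cont : Continuous gg := by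
  unfold gg Real.logb
  apply Continuous.div_const
  apply Continuous.log (by fun_prop)
  intro x; have := one_lt_base x; positivity

lemma gg_zero : gg 0 = 1 := by
  unfold gg
  norm_num

lemma gg_le (x : ℝ) : gg x ≤ 1 + max 0 (-x) / Real.log 2 := by
  have h1 : 1 + Real.exp (-x) ≤ 2 * Real.exp (max 0 (-x)) := by
    rcases le_total 0 (-x) with h | h
    · rw [max_eq_right h]
      have : (1:ℝ) ≤ Real.exp (-x) := Real.one_le_exp h
      linarith
    · rw [max_eq_left h]
      have : Real.exp (-x) ≤ 1 := Real.exp_le_one_iff.mpr h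
      rw [Real.exp_zero]; linarith
  have h2 : gg x ≤ Real.logb 2 (2 * Real.exp (max 0 (-x))) :=
    Real.logb_le_logb_of_le one_lt_two (one_lt_base x) h1
  refine h2.trans (le_of_eq ?_)
  rw [Real.logb_mul two_ne_zero (Real.exp_ne_zero _), Real.logb_self_eq_one (by norm_num),
    Real.logb, Real.log_exp]

lemma gg_comp_le {σ z : ℝ} : gg (σ^2/2 + σ*z) ≤ 1 + 2*z^2 / Real.log 2 := by
  refine (gg_le _).trans ?_
  have hmax : max 0 (-(σ^2/2 + σ*z)) ≤ 2*z^2 := by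
    apply max_le (by positivity)
    nlinarith [sq_nonneg (2*z + σ/2), sq_nonneg z, sq_nonneg σ]
  have := (div_le_div_iff_of_pos_right log2_pos).mpr hmax
  linarith


noncomputable def ss (x : ℝ) : ℝ := (1 + Real.exp x)⁻¹

noncomputable def sd (x : ℝ) : ℝ := -Real.exp x / (1 + Real.exp x)^2

lemma base_pos (x : ℝ) : 0 < 1 + Real.exp x := by positivity

lemma ss_pos (x : ℝ) : 0 < ss x := by unfold ss; positivity

lemma ss_le_one (x : ℝ) : ss x ≤ 1 := by
  have h := Real.exp_pos x
  rw [ss]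
  rw [inv_le_one_iff₀]
  right; linarith

lemma abs_ss_le (x : ℝ) : |ss x| ≤ 1 := by
  rw [abs_of_pos (ss_pos x)]; exact ss_le_one x

lemma abs_sd_le (x : ℝ) : |sd x| ≤ 1 := by
  have he := Real.exp_pos x
  have h2 : (0:ℝ) < (1 + Real.exp x)^2 := by positivity
  rw [sd, abs_div, abs_of_pos h2, abs_neg, abs_of_pos he, div_le_one h2]
  nlinarith

lemma ss_cont : Continuous ss := by
  unfold ss
  exact Continuous.inv₀ (by fun_prop) (fun x => (base_pos x).ne')

lemma sd_cont : Continuous sd := by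
  unfold sd
  apply Continuous.div (by fun_prop) (by fun_prop)
  intro x; have := base_pos x; positivity

lemma ss_hasDeriv (x : ℝ) : HasDerivAt ss (sd x) x := by
  have h : HasDerivAt (fun y : ℝ => 1 + Real.exp y) (Real.exp x) x :=
    (Real.hasDerivAt_exp x).const_add 1
  have := h.inv (base_pos x).ne'
  exact this.congr_deriv (by rw [sd])

lemma ss_add_sd (x : ℝ) : ss x + sd x = ((1 + Real.exp x)^2)⁻¹ := by
  have := (base_pos x).ne'
  rw [ss, sd]
  field_simp
  ring

lemma gg_hasDeriv (x : ℝ) : HasDerivAt gg (-(ss x) / Real.log 2) x := by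
  have h1 : HasDerivAt (fun y : ℝ => 1 + Real.exp (-y)) (-Real.exp (-x)) x := by
    have h := (Real.hasDerivAt_exp (-x)).comp x (hasDerivAt_neg x)
    simpa using (h.const_add 1)
  have h2 := (h1.log (one_lt_base x).ne').div_const (Real.log 2)
  have h3 : gg = fun y => Real.log (1 + Real.exp (-y)) / Real.log 2 := by
    funext y; rw [gg, Real.logb]
  rw [h3]
  refine h2.congr_deriv ?_
  have hx := (Real.exp_pos x).ne'
  have hb := (base_pos x).ne'
  rw [ss, Real.exp_neg]
  rw [div_eq_div_iff (by positivity) (log2_pos.ne')]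
  field_simp
  ring

lemma integrable_phi_mul {f : ℝ → ℝ} (hf : AEStronglyMeasurable f volume) (a b : ℝ)
    (hab : ∀ z, |f z| ≤ a + b * z^2) : Integrable (fun z => phi z * f z) := by
  have hK : Integrable (fun z : ℝ =>
      (Real.sqrt (2*Real.pi))⁻¹ * ((|a| + 4*|b|) * Real.exp (-(1/4 : ℝ) * z^2))) :=
    (((integrable_exp_neg_mul_sq (by norm_num : (0:ℝ) < 1/4)).const_mul _).const_mul _)
  refine hK.mono' (phi_cont.aestronglyMeasurable.mul hf) (ae_of_all _ fun z => ?_)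
  have h0 : ∀ y : ℝ, |f y| ≤ |a| + |b| * y^2 := fun y => by
    refine (hab y).trans ?_
    have := le_abs_self a
    have := le_abs_self b
    nlinarith [sq_nonneg y]
  have hsq : Real.exp (-(z^2)/2) ≤ Real.exp (-(1/4:ℝ) * z^2) := by
    apply Real.exp_le_exp.mpr; nlinarith [sq_nonneg z]
  have hz2 : z^2 * Real.exp (-(z^2)/2) ≤ 4 * Real.exp (-(1/4:ℝ) * z^2) := by
    have ht : z^2/4 ≤ Real.exp (z^2/4) := by
      have := Real.add_one_le_exp (z^2/4); linarith
    have hmul : z^2 * Real.exp (-(z^2)/2) ≤ (4 * Real.exp (z^2/4)) * Real.exp (-(z^2)/2) := by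
      have he := (Real.exp_pos (-(z^2)/2)).le
      nlinarith
    refine hmul.trans (le_of_eq ?_)
    rw [mul_assoc, ← Real.exp_add]
    ring_nf
  rw [Real.norm_eq_abs, abs_mul, abs_of_pos (phi_pos z)]
  have key : phi z * |f z| ≤ phi z * (|a| + |b| * z^2) := by
    have := phi_nonneg z
    exact mul_le_mul_of_nonneg_left (h0 z) this
  refine key.trans ?_
  rw [phi]
  have hs : (0:ℝ) < (Real.sqrt (2*Real.pi))⁻¹ := by positivity
  rw [mul_assoc]
  apply mul_le_mul_of_nonneg_left _ hs.le
  have hb4 : |b| * (z^2 * Real.exp (-(z^2)/2)) ≤ |b| * (4 * Real.exp (-(1/4:ℝ) * z^2)) :=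
    mul_le_mul_of_nonneg_left hz2 (abs_nonneg b)
  have ha1 : |a| * Real.exp (-(z^2)/2) ≤ |a| * Real.exp (-(1/4:ℝ) * z^2) :=
    mul_le_mul_of_nonneg_left hsq (abs_nonneg a)
  calc Real.exp (-(z^2)/2) * (|a| + |b| * z^2)
      = |a| * Real.exp (-(z^2)/2) + |b| * (z^2 * Real.exp (-(z^2)/2)) := by ring
    _ ≤ |a| * Real.exp (-(1/4:ℝ) * z^2) + |b| * (4 * Real.exp (-(1/4:ℝ) * z^2)) := by
        exact add_le_add ha1 hb4
    _ = (|a| + 4*|b|) * Real.exp (-(1/4:ℝ) * z^2) := by ring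


lemma phi_eq (z : ℝ) : ProbabilityTheory.gaussianPDFReal 0 1 z = phi z := by
  rw [ProbabilityTheory.gaussianPDFReal, phi]
  norm_num

lemma integral_phi : ∫ z : ℝ, phi z = 1 := by
  rw [show (fun z : ℝ => phi z) = ProbabilityTheory.gaussianPDFReal 0 1 from
    funext fun z => (phi_eq z).symm]
  exact ProbabilityTheory.integral_gaussianPDFReal_eq_one 0 one_ne_zero

noncomputable def FF (σ : ℝ) : ℝ := ∫ z : ℝ, phi z * gg (σ^2/2 + σ*z)

lemma change_of_var {σ : ℝ} (hσ : 0 < σ) :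
    (∫ x : ℝ, ProbabilityTheory.gaussianPDFReal (σ^2/2) (Real.toNNReal (σ^2)) x * gg x)
      = FF σ := by
  have hσ' : σ ≠ 0 := hσ.ne'
  set m := σ^2/2 with hm
  set f : ℝ → ℝ := fun y =>
    ProbabilityTheory.gaussianPDFReal m (Real.toNNReal (σ^2)) y * gg y with hf
  have hcoe : ((Real.toNNReal (σ^2)) : ℝ) = σ^2 := Real.coe_toNNReal _ (sq_nonneg σ)
  have key : ∀ z : ℝ, phi z * gg (m + σ*z) = σ • f (σ*z + m) := by
    intro z
    have hpdf : ProbabilityTheory.gaussianPDFReal m (Real.toNNReal (σ^2)) (σ*z + m)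
        = (Real.sqrt (2*Real.pi) * σ)⁻¹ * Real.exp (-(z^2)/2) := by
      rw [ProbabilityTheory.gaussianPDFReal, hcoe]
      congr 1
      · rw [show 2*Real.pi*σ^2 = (2*Real.pi)*σ^2 by ring,
          Real.sqrt_mul (by positivity) (σ^2), Real.sqrt_sq hσ.le]
      · congr 1
        field_simp
        ring
    rw [hf]
    simp only [smul_eq_mul]
    rw [hpdf, phi]
    rw [mul_inv]
    field_simp
    ring_nf
  symm
  calc FF σ = ∫ z : ℝ, σ • f (σ*z + m) := by
        rw [FF]; congr 1; funext z; exact key z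
    _ = σ • ∫ z : ℝ, f (σ*z + m) := integral_smul σ _
    _ = σ • ∫ z : ℝ, (fun w => f (w + m)) (σ*z) := rfl
    _ = σ • (|σ⁻¹| • ∫ w : ℝ, f (w + m)) := by
        rw [MeasureTheory.Measure.integral_comp_mul_left (fun w => f (w+m)) σ]
    _ = σ • (|σ⁻¹| • ∫ y : ℝ, f y) := by rw [integral_add_right_eq_self]
    _ = ∫ y : ℝ, f y := by
        rw [abs_of_pos (inv_pos.mpr hσ), smul_smul, mul_inv_cancel₀ hσ', one_smul]

lemma abs_le_one_add_sq (z : ℝ) : |z| ≤ 1 + z^2 := by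
  nlinarith [sq_nonneg (|z| - 1), sq_abs z, abs_nonneg z]

lemma integrable_gg_comp (σ : ℝ) :
    Integrable (fun z => phi z * gg (σ^2/2 + σ*z)) := by
  apply integrable_phi_mul ?_ 1 (2 / Real.log 2)
  · intro z
    rw [abs_of_nonneg (gg_nonneg _)]
    refine (gg_comp_le).trans (le_of_eq ?_)
    ring
  · exact (gg_cont.comp (by fun_prop)).aestronglyMeasurable

lemma integrable_ss_comp (σ : ℝ) :
    Integrable (fun z => phi z * ss (σ^2/2 + σ*z)) := by
  apply integrable_phi_mul ((ss_cont.comp (by fun_prop)).aestronglyMeasurable) 1 1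
  intro z
  exact (abs_ss_le _).trans (by nlinarith [sq_nonneg z])

lemma integrable_sd_comp (σ : ℝ) :
    Integrable (fun z => phi z * sd (σ^2/2 + σ*z)) := by
  apply integrable_phi_mul ((sd_cont.comp (by fun_prop)).aestronglyMeasurable) 1 1
  intro z
  exact (abs_sd_le _).trans (by nlinarith [sq_nonneg z])

lemma integrable_zss_comp (σ : ℝ) :
    Integrable (fun z => phi z * (z * ss (σ^2/2 + σ*z))) := by
  apply integrable_phi_mul ?_ 1 1
  · intro z
    rw [abs_mul]
    calc |z| * |ss (σ^2/2 + σ*z)| ≤ |z| * 1 :=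
          mul_le_mul_of_nonneg_left (abs_ss_le _) (abs_nonneg z)
      _ = |z| := mul_one _
      _ ≤ 1 + 1 * z^2 := by
          have := abs_le_one_add_sq z; linarith
  · exact (measurable_id.mul ((ss_cont.comp (by fun_prop)).measurable)).aestronglyMeasurable

lemma inner_hasDeriv (σ z : ℝ) : HasDerivAt (fun σ : ℝ => σ^2/2 + σ*z) (σ + z) σ := by
  have h := ((hasDerivAt_pow 2 σ).div_const 2).add ((hasDerivAt_id σ).mul_const z)
  exact h.congr_deriv (by ring)

noncomputable def FFd (σ : ℝ) : ℝ :=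
  ∫ z : ℝ, phi z * ((σ + z) * (-(ss (σ^2/2 + σ*z)) / Real.log 2))

lemma hasDeriv_FF (σ₀ : ℝ) : HasDerivAt FF (FFd σ₀) σ₀ := by
  have key := hasDerivAt_integral_of_dominated_loc_of_deriv_le
    (F := fun (σ : ℝ) (z : ℝ) => phi z * gg (σ^2/2 + σ*z))
    (F' := fun (σ : ℝ) (z : ℝ) => phi z * ((σ + z) * (-(ss (σ^2/2 + σ*z)) / Real.log 2)))
    (x₀ := σ₀) (bound := fun z => phi z * ((|σ₀| + 2 + z^2) / Real.log 2))
    (μ := volume) (s := Metric.ball σ₀ 1) (Metric.ball_mem_nhds σ₀ one_pos)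
    (Eventually.of_forall fun σ =>
      ((phi_cont.mul (gg_cont.comp (by fun_prop))).aestronglyMeasurable))
    (integrable_gg_comp σ₀)
    ?meas' ?bound ?boundint ?diff
  · exact key.2
  case meas' =>
    exact (phi_cont.mul ((continuous_const.add continuous_id).mul
      ((ss_cont.comp (by fun_prop)).neg.div_const _))).aestronglyMeasurable
  case bound =>
    refine Eventually.of_forall fun z => fun σ hσ => ?_
    have hball : |σ - σ₀| < 1 := by
      simpa [Real.dist_eq] using hσ
    have hσabs : |σ| ≤ |σ₀| + 1 := by
      have := abs_sub_abs_le_abs_sub σ σ₀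
      linarith
    have h1 : |σ + z| * |ss (σ^2/2 + σ*z)| ≤ (|σ₀| + 2 + z^2) := by
      have h2 : |σ + z| ≤ |σ| + |z| := abs_add_le _ _
      have h3 := abs_le_one_add_sq z
      have h4 := abs_ss_le (σ^2/2 + σ*z)
      have h5 : |σ + z| * |ss (σ^2/2 + σ*z)| ≤ |σ + z| * 1 :=
        mul_le_mul_of_nonneg_left h4 (abs_nonneg _)
      calc |σ + z| * |ss (σ^2/2 + σ*z)| ≤ |σ + z| := by linarith
        _ ≤ |σ| + |z| := h2
        _ ≤ (|σ₀| + 1) + (1 + z^2) := add_le_add hσabs h3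
        _ = |σ₀| + 2 + z^2 := by ring
    simp only [Real.norm_eq_abs, abs_mul, abs_of_pos (phi_pos z)]
    apply mul_le_mul_of_nonneg_left ?_ (phi_nonneg z)
    rw [abs_div, abs_neg, abs_of_pos log2_pos, mul_div_assoc']
    rw [div_le_div_iff_of_pos_right log2_pos]
    exact h1
  case boundint =>
    apply integrable_phi_mul (Continuous.aestronglyMeasurable (by continuity))
      ((|σ₀| + 2)/Real.log 2) (1/Real.log 2)
    intro z
    have hnn : 0 ≤ (|σ₀| + 2 + z^2) / Real.log 2 := by positivity
    rw [abs_of_nonneg hnn]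
    apply le_of_eq
    field_simp
  case diff =>
    refine Eventually.of_forall fun z => fun σ _ => ?_
    have h := ((gg_hasDeriv (σ^2/2 + σ*z)).comp σ (inner_hasDeriv σ z)).const_mul (phi z)
    exact h.congr_deriv (by ring)


lemma stein {σ : ℝ} (hσ : 0 < σ) :
    ∫ z : ℝ, phi z * (z * ss (σ^2/2 + σ*z))
      = σ * ∫ z : ℝ, phi z * sd (σ^2/2 + σ*z) := by
  set m := σ^2/2 with hm
  set H : ℝ → ℝ := fun z => phi z * ss (m + σ*z) with hH
  set H' : ℝ → ℝ := fun z => phi z * (-(z * ss (m + σ*z)) + σ * sd (m + σ*z)) with hH'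
  have hderiv : ∀ z, HasDerivAt H (H' z) z := by
    intro z
    have hinner : HasDerivAt (fun z : ℝ => m + σ*z) σ z := by
      simpa using ((hasDerivAt_id z).const_mul σ).const_add m
    have h2 := (ss_hasDeriv (m + σ*z)).comp z hinner
    have h3 := (phi_hasDeriv z).mul h2
    exact h3.congr_deriv (by simp only [hH', Function.comp_apply]; ring)
  have hint : Integrable H' := by
    rw [hH']
    apply integrable_phi_mul ?_ (σ + 1) 1
    · intro z
      have h1 := abs_ss_le (m + σ*z)
      have h2 := abs_sd_le (m + σ*z)
      have h3 := abs_le_one_add_sq z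
      calc |(-(z * ss (m + σ*z)) + σ * sd (m + σ*z))|
          ≤ |z * ss (m + σ*z)| + |σ * sd (m + σ*z)| := by
            rw [← abs_neg (z * ss (m + σ*z))]; exact abs_add_le _ _
        _ ≤ |z| * 1 + |σ| * 1 := by
            rw [abs_mul, abs_mul]
            exact add_le_add (mul_le_mul_of_nonneg_left h1 (abs_nonneg z))
              (mul_le_mul_of_nonneg_left h2 (abs_nonneg σ))
        _ ≤ (1 + z^2) + σ := by
            rw [mul_one, mul_one, abs_of_pos hσ]; linarith
        _ = σ + 1 + 1 * z^2 := by ring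
    · apply Continuous.aestronglyMeasurable
      apply Continuous.add
      · exact (continuous_id.mul (ss_cont.comp (by fun_prop))).neg
      · exact continuous_const.mul (sd_cont.comp (by fun_prop))
  have hlimTop : Filter.Tendsto H Filter.atTop (nhds 0) := by
    apply squeeze_zero_norm (fun z => ?_) phi_tendsto_atTop
    show |phi z * ss (m + σ*z)| ≤ phi z
    calc |phi z * ss (m + σ*z)| = phi z * |ss (m + σ*z)| := by
          rw [abs_mul, abs_of_pos (phi_pos z)]
      _ ≤ phi z * 1 := mul_le_mul_of_nonneg_left (abs_ss_le _) (phi_nonneg z)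
      _ = phi z := mul_one _
  have hlimBot : Filter.Tendsto H Filter.atBot (nhds 0) := by
    apply squeeze_zero_norm (fun z => ?_) phi_tendsto_atBot
    show |phi z * ss (m + σ*z)| ≤ phi z
    calc |phi z * ss (m + σ*z)| = phi z * |ss (m + σ*z)| := by
          rw [abs_mul, abs_of_pos (phi_pos z)]
      _ ≤ phi z * 1 := mul_le_mul_of_nonneg_left (abs_ss_le _) (phi_nonneg z)
      _ = phi z := mul_one _
  have h1 : ∫ z in Set.Iic (0:ℝ), H' z = H 0 - 0 :=
    integral_Iic_of_hasDerivAt_of_tendsto' (fun x _ => hderiv x) hint.integrableOn hlimBot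
  have h2 : ∫ z in Set.Ioi (0:ℝ), H' z = 0 - H 0 :=
    integral_Ioi_of_hasDerivAt_of_tendsto' (fun x _ => hderiv x) hint.integrableOn hlimTop
  have h3 : ∫ z : ℝ, H' z = 0 := by
    rw [← intervalIntegral.integral_Iic_add_Ioi hint.integrableOn hint.integrableOn, h1, h2]
    ring
  have iA := integrable_zss_comp σ
  have iB := integrable_sd_comp σ
  have hsplit : ∫ z : ℝ, H' z
      = -(∫ z : ℝ, phi z * (z * ss (m + σ*z))) + σ * ∫ z : ℝ, phi z * sd (m + σ*z) := by
    rw [hH']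
    have : (fun z => phi z * (-(z * ss (m + σ*z)) + σ * sd (m + σ*z)))
        = fun z => -(phi z * (z * ss (m + σ*z))) + σ * (phi z * sd (m + σ*z)) := by
      funext z; ring
    have iA' : Integrable (fun z => -(phi z * (z * ss (m + σ*z)))) volume := iA.neg
    have iB' : Integrable (fun z => σ * (phi z * sd (m + σ*z))) volume := iB.const_mul σ
    rw [this, integral_add iA' iB', integral_neg, integral_const_mul]
  rw [hsplit] at h3
  linarith

lemma FF_deriv_neg {σ : ℝ} (hσ : 0 < σ) : FFd σ < 0 := by
  set m := σ^2/2 with hm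
  have iS := integrable_ss_comp σ
  have iA := integrable_zss_comp σ
  have iB := integrable_sd_comp σ
  have hre : (fun z => phi z * ((σ + z) * (-(ss (m + σ*z)) / Real.log 2)))
      = fun z => (-(1/Real.log 2)) * (σ * (phi z * ss (m + σ*z))
          + phi z * (z * ss (m + σ*z))) := by
    funext z; field_simp
  have hFFd : FFd σ = (-(1/Real.log 2)) * (σ * (∫ z : ℝ, phi z * ss (m + σ*z))
      + ∫ z : ℝ, phi z * (z * ss (m + σ*z))) := by
    rw [FFd]
    rw [show (fun z => phi z * ((σ + z) * (-ss (σ^2/2 + σ*z) / Real.log 2)))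
        = fun z => (-(1/Real.log 2)) * (σ * (phi z * ss (m + σ*z))
          + phi z * (z * ss (m + σ*z))) from hre]
    have iS' : Integrable (fun z => σ * (phi z * ss (m + σ*z))) volume := iS.const_mul σ
    rw [integral_const_mul, integral_add iS' iA, integral_const_mul]
  rw [hFFd, stein hσ]
  have hsum : (∫ z : ℝ, phi z * ss (m + σ*z)) + (∫ z : ℝ, phi z * sd (m + σ*z))
      = ∫ z : ℝ, phi z * ((1 + Real.exp (m + σ*z))^2)⁻¹ := by
    rw [← integral_add iS iB]
    congr 1; funext z
    rw [← ss_add_sd]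
    ring
  have hpos : 0 < ∫ z : ℝ, phi z * ((1 + Real.exp (m + σ*z))^2)⁻¹ := by
    have hintp : Integrable (fun z => phi z * ((1 + Real.exp (m + σ*z))^2)⁻¹) := by
      have := integral_add iS iB
      have heq : (fun z => phi z * ((1 + Real.exp (m + σ*z))^2)⁻¹)
          = fun z => phi z * ss (m + σ*z) + phi z * sd (m + σ*z) := by
        funext z; rw [← ss_add_sd]; ring
      rw [heq]
      exact iS.add iB
    rw [integral_pos_iff_support_of_nonneg]
    · have : Function.support (fun z => phi z * ((1 + Real.exp (m + σ*z))^2)⁻¹)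
          = Set.univ := by
        apply Set.eq_univ_iff_forall.mpr
        intro z
        rw [Function.mem_support]
        have h1 := phi_pos z
        have h2 := base_pos (m + σ*z)
        positivity
      rw [this, Real.volume_univ]
      exact ENNReal.zero_lt_top
    · intro z
      have h1 := phi_pos z
      have h2 := base_pos (m + σ*z)
      positivity
    · exact hintp
  calc (-(1/Real.log 2)) * (σ * (∫ z : ℝ, phi z * ss (m + σ*z))
        + σ * ∫ z : ℝ, phi z * sd (m + σ*z))
      = (-(σ/Real.log 2)) * ((∫ z : ℝ, phi z * ss (m + σ*z))
        + (∫ z : ℝ, phi z * sd (m + σ*z))) := by ring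
    _ = (-(σ/Real.log 2)) * ∫ z : ℝ, phi z * ((1 + Real.exp (m + σ*z))^2)⁻¹ := by
        rw [hsum]
    _ < 0 := by
        apply mul_neg_of_neg_of_pos ?_ hpos
        have := log2_pos
        rw [neg_lt, neg_zero]
        positivity


lemma integrable_bound_main :
    Integrable (fun z : ℝ => phi z * (1 + 2*z^2/Real.log 2)) := by
  apply integrable_phi_mul (Continuous.aestronglyMeasurable (by continuity)) 1 (2/Real.log 2)
  intro z
  have hnn : (0:ℝ) ≤ 1 + 2*z^2/Real.log 2 := by positivity
  rw [abs_of_nonneg hnn]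
  apply le_of_eq
  ring

lemma gg_tendsto_atTop : Filter.Tendsto gg Filter.atTop (nhds 0) := by
  have e1 : Filter.Tendsto (fun x : ℝ => Real.exp (-x)) Filter.atTop (nhds 0) :=
    Real.tendsto_exp_atBot.comp tendsto_neg_atTop_atBot
  have e2 : Filter.Tendsto (fun x : ℝ => 1 + Real.exp (-x)) Filter.atTop (nhds 1) := by
    have : Filter.Tendsto (fun x : ℝ => 1 + Real.exp (-x)) Filter.atTop (nhds (1+0)) :=
      tendsto_const_nhds.add e1
    simpa using this
  have e3 : Filter.Tendsto (fun x : ℝ => Real.log (1 + Real.exp (-x)))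
      Filter.atTop (nhds 0) := by
    have := (Real.continuousAt_log one_ne_zero).tendsto.comp e2
    simpa [Function.comp_def] using this
  have e4 := e3.div_const (Real.log 2)
  rw [zero_div] at e4
  exact e4.congr (fun x => by rw [gg, Real.logb])

lemma FF_tendsto_zero : Filter.Tendsto FF (nhdsWithin 0 (Set.Ioi (0:ℝ))) (nhds 1) := by
  have h := MeasureTheory.tendsto_integral_filter_of_dominated_convergence
    (F := fun (σ : ℝ) (z : ℝ) => phi z * gg (σ^2/2 + σ*z))
    (f := fun z : ℝ => phi z)
    (bound := fun z : ℝ => phi z * (1 + 2*z^2/Real.log 2))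
    (μ := volume) (l := nhdsWithin 0 (Set.Ioi (0:ℝ)))
    (Filter.Eventually.of_forall fun σ =>
      (phi_cont.mul (gg_cont.comp (by fun_prop))).aestronglyMeasurable)
    (Filter.Eventually.of_forall fun σ => ae_of_all _ fun z => by
      rw [Real.norm_eq_abs, abs_mul, abs_of_pos (phi_pos z), abs_of_nonneg (gg_nonneg _)]
      exact mul_le_mul_of_nonneg_left gg_comp_le (phi_nonneg z))
    integrable_bound_main
    (ae_of_all _ fun z => by
      have c : Continuous fun σ : ℝ => phi z * gg (σ^2/2 + σ*z) :=
        continuous_const.mul (gg_cont.comp (by fun_prop))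
      have h5 : Filter.Tendsto (fun σ : ℝ => phi z * gg (σ^2/2 + σ*z))
          (nhdsWithin 0 (Set.Ioi (0:ℝ))) (nhds (phi z * gg (0^2/2 + 0*z))) :=
        (c.tendsto 0).mono_left nhdsWithin_le_nhds
      simpa [gg_zero] using h5)
  rw [integral_phi] at h
  exact h

lemma FF_tendsto_atTop : Filter.Tendsto FF Filter.atTop (nhds 0) := by
  have h := MeasureTheory.tendsto_integral_filter_of_dominated_convergence
    (F := fun (σ : ℝ) (z : ℝ) => phi z * gg (σ^2/2 + σ*z))
    (f := fun _ : ℝ => (0:ℝ))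
    (bound := fun z : ℝ => phi z * (1 + 2*z^2/Real.log 2))
    (μ := volume) (l := Filter.atTop)
    (Filter.Eventually.of_forall fun σ =>
      (phi_cont.mul (gg_cont.comp (by fun_prop))).aestronglyMeasurable)
    (Filter.Eventually.of_forall fun σ => ae_of_all _ fun z => by
      rw [Real.norm_eq_abs, abs_mul, abs_of_pos (phi_pos z), abs_of_nonneg (gg_nonneg _)]
      exact mul_le_mul_of_nonneg_left gg_comp_le (phi_nonneg z))
    integrable_bound_main
    (ae_of_all _ fun z => by
      have h1 : Filter.Tendsto (fun σ : ℝ => σ^2/2 + σ*z) Filter.atTop Filter.atTop := by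
        apply tendsto_atTop_mono' Filter.atTop ?_ tendsto_id
        filter_upwards [Filter.eventually_ge_atTop (2*|z| + 2)] with σ hσ
        have hz1 := neg_abs_le z
        have hz0 := abs_nonneg z
        have hσpos : (0:ℝ) ≤ σ := by linarith
        have hfac : (0:ℝ) ≤ σ/2 + z - 1 := by linarith
        have := mul_nonneg hσpos hfac
        show σ ≤ σ^2/2 + σ*z
        nlinarith
      have h2 := gg_tendsto_atTop.comp h1
      have h3 : Filter.Tendsto (fun σ : ℝ => phi z * (gg ((fun σ : ℝ => σ^2/2 + σ*z) σ)))
          Filter.atTop (nhds (phi z * 0)) := tendsto_const_nhds.mul h2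
      simpa using h3)
  rw [integral_zero] at h
  exact h

end JfunAux


lemma Jfun_eq {σ : ℝ} (hσ : 0 < σ) : Jfun σ = 1 - JfunAux.FF σ := by
  rw [Jfun, ← JfunAux.change_of_var hσ]
  rfl

/-- the J-function is strictly increasing on `(0,∞)`, tends to `0`
as `σ → 0⁺` and tends to `1` as `σ → ∞`. -/
theorem Jfun_strictMono_and_limits :
    StrictMonoOn Jfun (Set.Ioi (0 : ℝ)) ∧
    Filter.Tendsto Jfun (nhdsWithin 0 (Set.Ioi (0 : ℝ))) (nhds 0) ∧
    Filter.Tendsto Jfun Filter.atTop (nhds 1) := by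
  have hanti : StrictAntiOn JfunAux.FF (Set.Ioi (0:ℝ)) := by
    apply strictAntiOn_of_deriv_neg (convex_Ioi 0)
      (fun x _ => (JfunAux.hasDeriv_FF x).continuousAt.continuousWithinAt)
    intro x hx
    rw [interior_Ioi] at hx
    rw [(JfunAux.hasDeriv_FF x).deriv]
    exact JfunAux.FF_deriv_neg hx
  refine ⟨?_, ?_, ?_⟩
  · intro a ha b hb hab
    rw [Jfun_eq ha, Jfun_eq hb]
    have := hanti ha hb hab
    linarith
  · have heq : Jfun =ᶠ[nhdsWithin 0 (Set.Ioi (0:ℝ))] fun σ => 1 - JfunAux.FF σ := by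
      filter_upwards [self_mem_nhdsWithin] with σ hσ using Jfun_eq hσ
    have h1 : Filter.Tendsto (fun σ => 1 - JfunAux.FF σ)
        (nhdsWithin 0 (Set.Ioi (0:ℝ))) (nhds (1 - 1)) :=
      tendsto_const_nhds.sub JfunAux.FF_tendsto_zero
    rw [sub_self] at h1
    exact Filter.Tendsto.congr' heq.symm h1
  · have heq : Jfun =ᶠ[Filter.atTop] fun σ => 1 - JfunAux.FF σ := by
      filter_upwards [Filter.eventually_gt_atTop (0:ℝ)] with σ hσ using Jfun_eq hσ
    have h1 : Filter.Tendsto (fun σ => 1 - JfunAux.FF σ)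
        Filter.atTop (nhds (1 - 0)) :=
      tendsto_const_nhds.sub JfunAux.FF_tendsto_atTop
    rw [sub_zero] at h1
    exact Filter.Tendsto.congr' heq.symm h1
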